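/- For all x ≥ 0, (1 + x + x²/2 + x³/6) e^{-x} ≤ 4 e^{-√(3/2)} (1 + x/2) e^{-x/2}, and hence (1 + x + x²/2 + x³/6) e^{-x} < 1.176 (1 + x/2) e^{-x/2}. -/

import Mathlib

open Real

private lemma nonneg_aux {f g : ℝ → ℝ} (hf : ∀ t, HasDerivAt f (g t) t) (h0 : f 0 = 0)
    (hneg : ∀ t, t ≤ 0 → g t ≤ 0) (hpos : ∀ t, 0 ≤ t → 0 ≤ g t) (t : ℝ) : 0 ≤ f t := by
  have hdiff : Differentiable ℝ f := fun x => (hf x).differentiableAt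
  rcases le_total 0 t with ht | ht
  · have hm : MonotoneOn f (Set.Ici 0) := by
      apply monotoneOn_of_deriv_nonneg (convex_Ici 0) hdiff.continuous.continuousOn
        hdiff.differentiableOn
      intro x hx
      rw [(hf x).deriv]
      exact hpos x (le_of_lt (by simpa [interior_Ici] using hx))
    have := hm Set.self_mem_Ici (Set.mem_Ici.mpr ht) ht
    linarith [h0 ▸ this]
  · have hm : AntitoneOn f (Set.Iic 0) := by
      apply antitoneOn_of_deriv_nonpos (convex_Iic 0) hdiff.continuous.continuousOn
        hdiff.differentiableOn
      intro x hx
      rw [(hf x).deriv]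
      exact hneg x (le_of_lt (by simpa [interior_Iic] using hx))
    have := hm (Set.mem_Iic.mpr ht) Set.self_mem_Iic ht
    linarith [h0 ▸ this]

private lemma mono_aux {f g : ℝ → ℝ} (hf : ∀ t, HasDerivAt f (g t) t) (hg : ∀ t, 0 ≤ g t) :
    Monotone f := by
  apply monotone_of_deriv_nonneg (fun x => (hf x).differentiableAt)
  intro t
  rw [(hf t).deriv]
  exact hg t

private lemma cubic_le_exp (t : ℝ) : 1 + t + t^2/2 + t^3/6 ≤ Real.exp t := by
  have hg : ∀ u : ℝ, HasDerivAt (fun u => Real.exp u - (1 + u + u^2/2)) (Real.exp u - (1 + u)) u := by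
    intro u
    have a2 : HasDerivAt (fun u : ℝ => u^2) (2*u) u := by simpa using hasDerivAt_pow 2 u
    have h2 : HasDerivAt (fun u : ℝ => 1 + u + u^2/2) (1 + u) u := by
      have := ((hasDerivAt_id u).const_add 1).add (a2.div_const 2)
      exact this.congr_deriv (by ring)
    exact (Real.hasDerivAt_exp u).sub h2
  have hmono : Monotone (fun u => Real.exp u - (1 + u + u^2/2)) :=
    mono_aux hg (fun u => by have := Real.add_one_le_exp u; simp; linarith)
  have hf : ∀ u : ℝ, HasDerivAt (fun u => Real.exp u - (1 + u + u^2/2 + u^3/6))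
      (Real.exp u - (1 + u + u^2/2)) u := by
    intro u
    have a2 : HasDerivAt (fun u : ℝ => u^2) (2*u) u := by simpa using hasDerivAt_pow 2 u
    have a3 : HasDerivAt (fun u : ℝ => u^3) (3*u^2) u := by simpa using hasDerivAt_pow 3 u
    have h2 : HasDerivAt (fun u : ℝ => 1 + u + u^2/2 + u^3/6) (1 + u + u^2/2) u := by
      have := (((hasDerivAt_id u).const_add 1).add (a2.div_const 2)).add (a3.div_const 6)
      exact this.congr_deriv (by ring)
    exact (Real.hasDerivAt_exp u).sub h2
  have key := nonneg_aux hf (by norm_num)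
    (fun u hu => by
      have := hmono hu
      simpa using this)
    (fun u hu => by
      have := hmono hu
      simpa using this) t
  simp at key
  linarith

private lemma quintic_le_exp (t : ℝ) :
    1 + t + t^2/2 + t^3/6 + t^4/24 + t^5/120 ≤ Real.exp t := by
  have hg : ∀ u : ℝ, HasDerivAt (fun u => Real.exp u - (1 + u + u^2/2 + u^3/6 + u^4/24))
      (Real.exp u - (1 + u + u^2/2 + u^3/6)) u := by
    intro u
    have a2 : HasDerivAt (fun u : ℝ => u^2) (2*u) u := by simpa using hasDerivAt_pow 2 u
    have a3 : HasDerivAt (fun u : ℝ => u^3) (3*u^2) u := by simpa using hasDerivAt_pow 3 u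
    have a4 : HasDerivAt (fun u : ℝ => u^4) (4*u^3) u := by simpa using hasDerivAt_pow 4 u
    have h2 : HasDerivAt (fun u : ℝ => 1 + u + u^2/2 + u^3/6 + u^4/24)
        (1 + u + u^2/2 + u^3/6) u := by
      have := ((((hasDerivAt_id u).const_add 1).add (a2.div_const 2)).add
        (a3.div_const 6)).add (a4.div_const 24)
      exact this.congr_deriv (by ring)
    exact (Real.hasDerivAt_exp u).sub h2
  have hmono : Monotone (fun u => Real.exp u - (1 + u + u^2/2 + u^3/6 + u^4/24)) :=
    mono_aux hg (fun u => by have := cubic_le_exp u; simp; linarith)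
  have hf : ∀ u : ℝ, HasDerivAt
      (fun u => Real.exp u - (1 + u + u^2/2 + u^3/6 + u^4/24 + u^5/120))
      (Real.exp u - (1 + u + u^2/2 + u^3/6 + u^4/24)) u := by
    intro u
    have a2 : HasDerivAt (fun u : ℝ => u^2) (2*u) u := by simpa using hasDerivAt_pow 2 u
    have a3 : HasDerivAt (fun u : ℝ => u^3) (3*u^2) u := by simpa using hasDerivAt_pow 3 u
    have a4 : HasDerivAt (fun u : ℝ => u^4) (4*u^3) u := by simpa using hasDerivAt_pow 4 u
    have a5 : HasDerivAt (fun u : ℝ => u^5) (5*u^4) u := by simpa using hasDerivAt_pow 5 u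
    have h2 : HasDerivAt (fun u : ℝ => 1 + u + u^2/2 + u^3/6 + u^4/24 + u^5/120)
        (1 + u + u^2/2 + u^3/6 + u^4/24) u := by
      have := (((((hasDerivAt_id u).const_add 1).add (a2.div_const 2)).add
        (a3.div_const 6)).add (a4.div_const 24)).add (a5.div_const 120)
      exact this.congr_deriv (by ring)
    exact (Real.hasDerivAt_exp u).sub h2
  have key := nonneg_aux hf (by norm_num)
    (fun u hu => by
      have := hmono hu
      simpa using this)
    (fun u hu => by
      have := hmono hu
      simpa using this) t
  simp at key
  linarith

set_option maxHeartbeats 1000000 in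
/-- For all `x ≥ 0`,
`(1 + x + x²/2 + x³/6)e^{-x} ≤ 4 e^{-√(3/2)}(1 + x/2)e^{-x/2}`, and hence
`(1 + x + x²/2 + x³/6)e^{-x} < 1.176 (1 + x/2)e^{-x/2}`. -/
theorem taylor_tail_third_order (x : ℝ) (hx : 0 ≤ x) :
    (1 + x + x ^ 2 / 2 + x ^ 3 / 6) * Real.exp (-x)
        ≤ 4 * Real.exp (-Real.sqrt (3 / 2)) * ((1 + x / 2) * Real.exp (-x / 2)) ∧
    (1 + x + x ^ 2 / 2 + x ^ 3 / 6) * Real.exp (-x)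
        < 1.176 * ((1 + x / 2) * Real.exp (-x / 2)) := by
  set s := Real.sqrt (3/2) with hs_def
  have hs2 : s^2 = 3/2 := Real.sq_sqrt (by norm_num)
  have hs0 : 0 ≤ s := Real.sqrt_nonneg _
  have hs54 : s ≤ 5/4 := by nlinarith
  -- the key polynomial/exp inequality
  have hq := quintic_le_exp (x/2 - s)
  set u := x/2 - s with hu_def
  have hP : (0:ℝ) ≤ (1 + x/2) * (Real.exp u - (1 + u + u^2/2 + u^3/6 + u^4/24 + u^5/120)) :=
    mul_nonneg (by linarith) (by linarith)
  have hT : (0:ℝ) ≤ (x - 2*s)^2 := sq_nonneg _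
  have hF : (0:ℝ) ≤ 5/2 - 2*s := by linarith
  have t1 : (0:ℝ) ≤ (x - 2*s)^2 * x := mul_nonneg hT hx
  have t2 : (0:ℝ) ≤ (x - 2*s)^2 * x^2 := mul_nonneg hT (by positivity)
  have t3 : (0:ℝ) ≤ (x - 2*s)^2 * x^3 := mul_nonneg hT (by positivity)
  have t4 : (0:ℝ) ≤ (x - 2*s)^2 * x^4 := mul_nonneg hT (by positivity)
  have s0 : (0:ℝ) ≤ (5/2 - 2*s) * ((x - 2*s)^2) := mul_nonneg hF hT
  have s1 : (0:ℝ) ≤ (5/2 - 2*s) * ((x - 2*s)^2 * x) := mul_nonneg hF t1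
  have s2 : (0:ℝ) ≤ (5/2 - 2*s) * ((x - 2*s)^2 * x^2) := mul_nonneg hF t2
  have s3 : (0:ℝ) ≤ (5/2 - 2*s) * ((x - 2*s)^2 * x^3) := mul_nonneg hF t3
  have hident : 4*(1 + x/2)*(1 + u + u^2/2 + u^3/6 + u^4/24 + u^5/120)
      - (1 + x + x^2/2 + x^3/6)
      = (1/192)*((x - 2*s)^2) + (101/1920)*((x - 2*s)^2 * x)
        + (53/1920)*((x - 2*s)^2 * x^2) + (3/1280)*((x - 2*s)^2 * x^3)
        + (1/1920)*((x - 2*s)^2 * x^4)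
        + (203/480)*((5/2 - 2*s) * ((x - 2*s)^2))
        + (21/320)*((5/2 - 2*s) * ((x - 2*s)^2 * x))
        + (13/960)*((5/2 - 2*s) * ((x - 2*s)^2 * x^2))
        + (1/640)*((5/2 - 2*s) * ((x - 2*s)^2 * x^3)) := by
    rw [hu_def]
    linear_combination (4*((-1/2) + (1/3)*(2*s) + (1/96)*(2*s)^2 + (-1/960)*(2*s)^3
      + (-1/2)*x + (-1/48)*x*(2*s) + (1/96)*x*(2*s)^2 + (-1/1920)*x*(2*s)^3
      + (1/96)*x^2 + (-17/960)*x^2*(2*s) + (1/384)*x^2*(2*s)^2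
      + (1/120)*x^3 + (-7/1920)*x^3*(2*s) + (1/640)*x^4)) * hs2
  have key : (1 + x + x^2/2 + x^3/6) ≤ 4*(1 + x/2)*Real.exp u := by
    linarith [hP, hident, hT, t1, t2, t3, t4, s0, s1, s2, s3]
  -- multiply by exp(-x)
  have hexp : Real.exp u * Real.exp (-x) = Real.exp (-s) * Real.exp (-x/2) := by
    rw [← Real.exp_add, ← Real.exp_add]
    congr 1
    rw [hu_def]; ring
  have hgoal1 : (1 + x + x ^ 2 / 2 + x ^ 3 / 6) * Real.exp (-x)
      ≤ 4 * Real.exp (-s) * ((1 + x / 2) * Real.exp (-x / 2)) := by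
    have hmul := mul_le_mul_of_nonneg_right key (Real.exp_pos (-x)).le
    have heq : 4*(1 + x/2)*Real.exp u * Real.exp (-x)
        = 4 * Real.exp (-s) * ((1 + x / 2) * Real.exp (-x / 2)) := by
      linear_combination (4*(1 + x/2)) * hexp
    calc (1 + x + x ^ 2 / 2 + x ^ 3 / 6) * Real.exp (-x)
        ≤ 4*(1 + x/2)*Real.exp u * Real.exp (-x) := by linarith [hmul]
      _ = _ := heq
  refine ⟨hgoal1, ?_⟩
  -- second part: 4 exp(-s) < 1.176
  have hs_lb : (1.2247:ℝ) ≤ s := by nlinarith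
  have hexp_s : (500/147 : ℝ) < Real.exp s := by
    have h1 : Real.exp (1.2247:ℝ) ≤ Real.exp s := Real.exp_le_exp.mpr hs_lb
    have h2 : Real.exp (1.2247:ℝ) = Real.exp 1 * Real.exp (0.2247:ℝ) := by
      rw [← Real.exp_add]; norm_num
    have h3 : (2.7182818283:ℝ) < Real.exp 1 := Real.exp_one_gt_d9
    have h4 : (1.2518:ℝ) ≤ Real.exp (0.2247:ℝ) := by
      have := cubic_le_exp (0.2247:ℝ)
      norm_num at this ⊢
      linarith
    nlinarith
  have hconst : 4 * Real.exp (-s) < 1.176 := by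
    have hinv : Real.exp (-s) * Real.exp s = 1 := by
      rw [← Real.exp_add]; simp
    have hpos : 0 < Real.exp (-s) := Real.exp_pos _
    nlinarith
  have hpos2 : 0 < (1 + x / 2) * Real.exp (-x / 2) := by positivity
  calc (1 + x + x ^ 2 / 2 + x ^ 3 / 6) * Real.exp (-x)
      ≤ 4 * Real.exp (-s) * ((1 + x / 2) * Real.exp (-x / 2)) := hgoal1
    _ < 1.176 * ((1 + x / 2) * Real.exp (-x / 2)) := by
        apply mul_lt_mul_of_pos_right hconst hpos2
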